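/- Let p be a prime with p > 5 and let A, B ∈ SL(2, 𝔽_p) be such that the subgroup of PSL₂(𝔽_p) generated by the images of A and B is isomorphic to the symmetric group S₄. Then tr(A B A⁻¹ B⁻¹) = 1, and each trace t ∈ {tr(A), tr(B), tr(AB)} satisfies t = 0, or t² = 1, or t² = 2. -/
import Mathlib

set_option maxRecDepth 40000

namespace OctahedralAux

/-! ### Decidable facts about `S₄` -/

theorem s4_34 : ∀ σ : Equiv.Perm (Fin 4), σ^3 = 1 ∨ σ^4 = 1 := by decide

theorem s4_sign3 : ∀ σ : Equiv.Perm (Fin 4), σ^3 = 1 → Equiv.Perm.sign σ = 1 := by decide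

theorem s4_sign4 : ∀ σ : Equiv.Perm (Fin 4), σ^4 = 1 → σ^2 ≠ 1 → Equiv.Perm.sign σ = -1 := by
  decide

theorem s4_swap_sign : Equiv.Perm.sign (Equiv.swap (0:Fin 4) 1) = -1 := by decide

theorem s4_noncomm :
    Equiv.swap (0:Fin 4) 1 * Equiv.swap 1 2 ≠ Equiv.swap 1 2 * Equiv.swap (0:Fin 4) 1 := by
  decide

/-! ### dihedral bound -/

theorem dihedral_card_le {G : Type*} [Group G] (u v : G) (hu : u^2 = 1) (hv : v^2 = 1)
    (m : ℕ) (hm : 0 < m) (hr : (u*v)^m = 1) :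
    Nat.card (Subgroup.closure {u, v} : Subgroup G) ≤ 2*m := by
  set r := u*v with hrdef
  have huu : u * u = 1 := by rw [← pow_two, hu]
  have hvv : v * v = 1 := by rw [← pow_two, hv]
  have hui : u⁻¹ = u := by rw [inv_eq_iff_mul_eq_one, huu]
  have hvi : v⁻¹ = v := by rw [inv_eq_iff_mul_eq_one, hvv]
  have h1 : u * r * u⁻¹ = r⁻¹ := by
    rw [hui, hrdef, mul_inv_rev, hui, hvi, show u * (u*v) * u = (u*u)*(v*u) by group, huu, one_mul]
  have hconj : ∀ i : ℤ, u * r^i * u = r^(-i : ℤ) := by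
    intro i
    have h2 := map_zpow (MulAut.conj u) r i
    simp only [MulAut.conj_apply, h1] at h2
    rw [hui] at h2
    rw [h2, inv_zpow, zpow_neg]
  let K : Subgroup G :=
    { carrier := {g | ∃ i : ℤ, g = r^i ∨ g = u * r^i}
      one_mem' := ⟨0, Or.inl (by simp)⟩
      mul_mem' := by
        rintro x y ⟨i, hi | hi⟩ ⟨j, hj | hj⟩ <;> subst hi hj
        · exact ⟨i+j, Or.inl (zpow_add r i j).symm⟩
        · refine ⟨j - i, Or.inr ?_⟩
          have h3 : r^i * (u * r^j) = u * (u * r^i * u) * r^j := by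
            rw [show u * (u * r^i * u) * r^j = (u*u) * r^i * (u * r^j) by group, huu, one_mul]
          rw [h3, hconj, mul_assoc, ← zpow_add, neg_add_eq_sub]
        · exact ⟨i + j, Or.inr (by rw [mul_assoc, ← zpow_add])⟩
        · refine ⟨j - i, Or.inl ?_⟩
          have h3 : (u * r^i) * (u * r^j) = (u * r^i * u) * r^j := by group
          rw [h3, hconj, ← zpow_add, neg_add_eq_sub]
      inv_mem' := by
        rintro x ⟨i, hi | hi⟩ <;> subst hi
        · exact ⟨-i, Or.inl (by rw [← zpow_neg])⟩
        · refine ⟨i, Or.inr ?_⟩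
          rw [mul_inv_rev, hui, ← zpow_neg]
          rw [show r^(-i:ℤ) * u = u * (u * r^(-i:ℤ) * u) by
              rw [show u * (u * r^(-i:ℤ) * u) = (u*u) * r^(-i:ℤ) * u by group, huu, one_mul],
            hconj]
          simp }
  have hle : Subgroup.closure {u, v} ≤ K := by
    rw [Subgroup.closure_le]
    rintro x (rfl | rfl)
    · exact ⟨0, Or.inr (by simp)⟩
    · refine ⟨1, Or.inr ?_⟩
      rw [zpow_one, hrdef, ← mul_assoc, huu, one_mul]
  have key : ∀ i : ℤ, r ^ i = r ^ ((i % m).toNat) := by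
    intro i
    have hnn : (0:ℤ) ≤ i % m := Int.emod_nonneg i (by positivity)
    have h4 : r ^ (i % (m:ℤ)) = r ^ i := by
      rw [Int.emod_def, zpow_sub, zpow_mul, zpow_natCast, hr, one_zpow]
      simp
    rw [← zpow_natCast, Int.toNat_of_nonneg hnn, h4]
  have hsurj : Function.Surjective (fun q : Fin 2 × Fin m =>
      (⟨u^(q.1 : ℕ) * r^(q.2 : ℕ), by
        rcases q with ⟨j, i⟩
        refine ⟨(i:ℕ), ?_⟩
        fin_cases j
        · simp [zpow_natCast]
        · simp [zpow_natCast]⟩ : K)) := by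
    rintro ⟨g, i, hg | hg⟩ <;>
      [refine ⟨⟨0, ⟨(i % m).toNat, ?_⟩⟩, ?_⟩; refine ⟨⟨1, ⟨(i % m).toNat, ?_⟩⟩, ?_⟩] <;>
      [skip; apply Subtype.ext; skip; apply Subtype.ext]
    · have := Int.emod_lt_of_pos i (show (0:ℤ) < m by exact_mod_cast hm)
      have := Int.emod_nonneg i (show (m:ℤ) ≠ 0 by positivity)
      omega
    · simp only [hg, key i, zpow_natCast]
      simp
    · have := Int.emod_lt_of_pos i (show (0:ℤ) < m by exact_mod_cast hm)
      have := Int.emod_nonneg i (show (m:ℤ) ≠ 0 by positivity)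
      omega
    · simp only [hg, key i, zpow_natCast]
      simp
  have hfin : Finite K := Finite.of_surjective _ hsurj
  calc Nat.card (Subgroup.closure {u,v} : Subgroup G) ≤ Nat.card K := Subgroup.card_le_of_le hle
  _ ≤ Nat.card (Fin 2 × Fin m) := Nat.card_le_card_of_surjective _ hsurj
  _ = 2*m := by simp


section MatrixLemmas

open Matrix

/-! ### 2×2 matrix identities -/

variable {F : Type*} [Field F]

theorem trace_adj_id (M N : Matrix (Fin 2) (Fin 2) F) :
    Matrix.trace (M*N) + Matrix.trace (M*adjugate N) = Matrix.trace M * Matrix.trace N := by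
  rw [Matrix.eta_fin_two M, Matrix.eta_fin_two N]
  simp only [Matrix.adjugate_fin_two_of, Matrix.mul_fin_two, Matrix.trace_fin_two_of]
  ring

theorem trace_adj (M : Matrix (Fin 2) (Fin 2) F) :
    Matrix.trace (adjugate M) = Matrix.trace M := by
  rw [Matrix.eta_fin_two M]
  simp only [Matrix.adjugate_fin_two_of, Matrix.trace_fin_two_of]
  ring

theorem fricke_id (M N : Matrix (Fin 2) (Fin 2) F) (hM : M.det = 1) (hN : N.det = 1) :
    Matrix.trace (M*N*adjugate M*adjugate N) =
      (Matrix.trace M)^2 + (Matrix.trace N)^2 + (Matrix.trace (M*N))^2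
        - Matrix.trace M * Matrix.trace N * Matrix.trace (M*N) - 2 := by
  rw [Matrix.det_fin_two] at hM hN
  rw [Matrix.eta_fin_two M, Matrix.eta_fin_two N]
  simp only [Matrix.adjugate_fin_two_of, Matrix.mul_fin_two, Matrix.trace_fin_two_of]
  linear_combination ((N 0 0 + N 1 1)^2 - 2) * hM
    + (M 0 0^2 + 2*M 0 1*M 1 0 + M 1 1^2) * hN

theorem cay2' (a b c d : F) (h : a*d - b*c = 1) :
    !![a, b; c, d] ^ 2 = (a+d) • !![a, b; c, d] - 1 := by
  rw [pow_two, ← Matrix.ext_iff]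
  simp only [Fin.forall_fin_two, Matrix.mul_fin_two, Matrix.one_fin_two, Matrix.smul_of,
    Matrix.smul_cons, smul_eq_mul, Matrix.smul_empty, Matrix.sub_apply, Matrix.of_apply,
    Matrix.cons_val', Matrix.cons_val_zero, Matrix.cons_val_one, Matrix.head_cons,
    Matrix.head_fin_const, Matrix.empty_val', Matrix.cons_val_fin_one]
  refine ⟨⟨by linear_combination -h, by linear_combination⟩,
    by linear_combination, by linear_combination -h⟩

theorem cay3' (a b c d : F) (h : a*d - b*c = 1) :
    !![a, b; c, d] ^ 3 = ((a+d)^2 - 1) • !![a, b; c, d] - (a+d) • 1 := by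
  rw [pow_succ, pow_two, ← Matrix.ext_iff]
  simp only [Fin.forall_fin_two, Matrix.mul_fin_two, Matrix.one_fin_two, Matrix.smul_of,
    Matrix.smul_cons, smul_eq_mul, Matrix.smul_empty, Matrix.sub_apply, Matrix.of_apply,
    Matrix.cons_val', Matrix.cons_val_zero, Matrix.cons_val_one, Matrix.head_cons,
    Matrix.head_fin_const, Matrix.empty_val', Matrix.cons_val_fin_one]
  refine ⟨⟨by linear_combination (-d - 2*a) * h, by linear_combination (-b) * h⟩,
    by linear_combination (-c) * h, by linear_combination (-2*d - a) * h⟩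

theorem cay2 (M : Matrix (Fin 2) (Fin 2) F) (h : M.det = 1) :
    M ^ 2 = Matrix.trace M • M - 1 := by
  rw [Matrix.det_fin_two] at h
  rw [Matrix.eta_fin_two M, Matrix.trace_fin_two_of]
  exact cay2' _ _ _ _ h

theorem cay3 (M : Matrix (Fin 2) (Fin 2) F) (h : M.det = 1) :
    M ^ 3 = ((Matrix.trace M)^2 - 1) • M - Matrix.trace M • 1 := by
  rw [Matrix.det_fin_two] at h
  rw [Matrix.eta_fin_two M, Matrix.trace_fin_two_of]
  exact cay3' _ _ _ _ h

theorem tr2 (M : Matrix (Fin 2) (Fin 2) F) (h : M.det = 1) :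
    Matrix.trace (M^2) = (Matrix.trace M)^2 - 2 := by
  rw [Matrix.det_fin_two] at h
  rw [pow_two, Matrix.eta_fin_two M]
  simp only [Matrix.mul_fin_two, Matrix.trace_fin_two_of]
  linear_combination -2*h

theorem scalar_cases (M : Matrix (Fin 2) (Fin 2) F) (h : M.det = 1) (c s : F) (hc : c ≠ 0)
    (hM : c • M = s • (1 : Matrix (Fin 2) (Fin 2) F)) : M = 1 ∨ M = -1 := by
  have hM' : M = (c⁻¹ * s) • (1 : Matrix (Fin 2) (Fin 2) F) := by
    rw [mul_smul, ← hM, inv_smul_smul₀ hc]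
  have hdet : (c⁻¹ * s)^2 = 1 := by
    have h2 := h
    rw [hM', Matrix.det_smul, Matrix.det_one, mul_one] at h2
    simpa using h2
  have hsplit : (c⁻¹*s - 1) * (c⁻¹*s + 1) = 0 := by linear_combination hdet
  rcases mul_eq_zero.1 hsplit with h1 | h1
  · left
    rw [hM', sub_eq_zero.1 h1, one_smul]
  · right
    rw [hM', eq_neg_of_add_eq_zero_left h1, neg_smul, one_smul]

theorem t_one (M : Matrix (Fin 2) (Fin 2) F) (h : M.det = 1)
    (h2 : M^2 = 1 ∨ M^2 = -1) (hM1 : M ≠ 1) (hM2 : M ≠ -1) : Matrix.trace M = 0 := by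
  by_contra ht
  rcases h2 with h2 | h2 <;> rw [cay2 M h] at h2
  · have hs : Matrix.trace M • M = (2:F) • (1 : Matrix (Fin 2) (Fin 2) F) := by
      rw [sub_eq_iff_eq_add] at h2
      rw [h2, two_smul]
    rcases scalar_cases M h _ _ ht hs with h' | h' <;> [exact hM1 h'; exact hM2 h']
  · have hs : Matrix.trace M • M = (0:F) • (1 : Matrix (Fin 2) (Fin 2) F) := by
      rw [sub_eq_iff_eq_add] at h2
      rw [h2, zero_smul, neg_add_cancel]
    rcases scalar_cases M h _ _ ht hs with h' | h' <;> [exact hM1 h'; exact hM2 h']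

theorem t_sq_one (M : Matrix (Fin 2) (Fin 2) F) (h : M.det = 1)
    (h3 : M^3 = 1 ∨ M^3 = -1) (hM1 : M ≠ 1) (hM2 : M ≠ -1) : (Matrix.trace M)^2 = 1 := by
  by_contra ht
  have ht' : (Matrix.trace M)^2 - 1 ≠ 0 := fun hh => ht (by linear_combination hh)
  rcases h3 with h3 | h3 <;> rw [cay3 M h] at h3
  · have hs : ((Matrix.trace M)^2 - 1) • M
        = (1 + Matrix.trace M) • (1 : Matrix (Fin 2) (Fin 2) F) := by
      rw [sub_eq_iff_eq_add] at h3
      rw [h3, add_smul, one_smul]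
    rcases scalar_cases M h _ _ ht' hs with h' | h' <;> [exact hM1 h'; exact hM2 h']
  · have hs : ((Matrix.trace M)^2 - 1) • M
        = (-1 + Matrix.trace M) • (1 : Matrix (Fin 2) (Fin 2) F) := by
      rw [sub_eq_iff_eq_add] at h3
      rw [h3, add_smul, neg_smul, one_smul]
    rcases scalar_cases M h _ _ ht' hs with h' | h' <;> [exact hM1 h'; exact hM2 h']

theorem t_sq_two (M : Matrix (Fin 2) (Fin 2) F) (h : M.det = 1)
    (h4 : M^4 = 1 ∨ M^4 = -1) (h2a : M^2 ≠ 1) (h2b : M^2 ≠ -1) : (Matrix.trace M)^2 = 2 := by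
  have hdet2 : (M^2).det = 1 := by rw [Matrix.det_pow, h, one_pow]
  have h4' : (M^2)^2 = 1 ∨ (M^2)^2 = -1 := by rwa [← pow_mul]
  have h0 := t_one (M^2) hdet2 h4' h2a h2b
  rw [tr2 M h] at h0
  linear_combination h0

end MatrixLemmas

end OctahedralAux

namespace OctahedralAux

abbrev SL2 (p : ℕ) : Type := Matrix.SpecialLinearGroup (Fin 2) (ZMod p)
abbrev PSL (p : ℕ) : Type := SL2 p ⧸ Subgroup.center (SL2 p)

theorem core (p : ℕ) (hp : p.Prime) (hp5 : 5 < p)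
    (A B : SL2 p)
    (e : (Subgroup.closure {(QuotientGroup.mk A : PSL p), QuotientGroup.mk B}) ≃*
      Equiv.Perm (Fin 4)) :
    Matrix.trace ((A * B * A⁻¹ * B⁻¹ : SL2 p) : Matrix (Fin 2) (Fin 2) (ZMod p)) = 1 ∧
    (∀ t : ZMod p,
      (t = Matrix.trace (A : Matrix (Fin 2) (Fin 2) (ZMod p)) ∨
        t = Matrix.trace (B : Matrix (Fin 2) (Fin 2) (ZMod p)) ∨
        t = Matrix.trace ((A * B : SL2 p) : Matrix (Fin 2) (Fin 2) (ZMod p))) →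
      t = 0 ∨ t ^ 2 = 1 ∨ t ^ 2 = 2) := by
  haveI : Fact p.Prime := ⟨hp⟩
  classical
  -- characteristic facts
  have hch : ∀ n : ℕ, 0 < n → n < p → ((n : ZMod p) ≠ 0) := by
    intro n hn hnp h0
    rw [ZMod.natCast_eq_zero_iff] at h0
    exact absurd (Nat.le_of_dvd hn h0) (by omega)
  have h2 : (2 : ZMod p) ≠ 0 := by
    have := hch 2 (by norm_num) (by omega)
    exact_mod_cast this
  have h3 : (3 : ZMod p) ≠ 0 := by
    have := hch 3 (by norm_num) (by omega)
    exact_mod_cast this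
  -- the center
  have hcen : ∀ g : SL2 p, g ∈ Subgroup.center (SL2 p) ↔
      ((g : Matrix (Fin 2) (Fin 2) (ZMod p)) = 1 ∨ (g : Matrix (Fin 2) (Fin 2) (ZMod p)) = -1) := by
    intro g
    rw [Matrix.SpecialLinearGroup.mem_center_iff]
    constructor
    · rintro ⟨r, hr, hsc⟩
      rw [Fintype.card_fin] at hr
      have hsplit : (r - 1) * (r + 1) = 0 := by linear_combination hr
      rcases mul_eq_zero.1 hsplit with h1 | h1
      · left
        rw [← hsc, sub_eq_zero.1 h1]
        simp [Matrix.scalar_apply]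
      · right
        rw [← hsc, eq_neg_of_add_eq_zero_left h1]
        ext i j
        simp [Matrix.scalar_apply, Matrix.diagonal, Matrix.one_apply]
        split <;> simp
    · rintro (h1 | h1)
      · exact ⟨1, by norm_num, by rw [h1]; simp [Matrix.scalar_apply]⟩
      · refine ⟨-1, by norm_num, ?_⟩
        rw [h1]
        ext i j
        simp [Matrix.scalar_apply, Matrix.diagonal, Matrix.one_apply]
        split <;> simp
  have hmk1 : ∀ g : SL2 p, (QuotientGroup.mk g : PSL p) = 1 ↔
      ((g : Matrix (Fin 2) (Fin 2) (ZMod p)) = 1 ∨ (g : Matrix (Fin 2) (Fin 2) (ZMod p)) = -1) :=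
    fun g => (QuotientGroup.eq_one_iff g).trans (hcen g)
  have hpow : ∀ (g : SL2 p) (k : ℕ), ((QuotientGroup.mk g : PSL p)^k = 1 ↔
      ((g : Matrix (Fin 2) (Fin 2) (ZMod p))^k = 1 ∨
        (g : Matrix (Fin 2) (Fin 2) (ZMod p))^k = -1)) := by
    intro g k
    rw [← QuotientGroup.mk_pow]
    exact (hmk1 (g^k)).trans (by rw [Matrix.SpecialLinearGroup.coe_pow])
  -- the subgroup
  set Hc : Subgroup (PSL p) :=
    Subgroup.closure {(QuotientGroup.mk A : PSL p), QuotientGroup.mk B} with hHc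
  have amem : (QuotientGroup.mk A : PSL p) ∈ Hc := Subgroup.subset_closure (Set.mem_insert _ _)
  have bmem : (QuotientGroup.mk B : PSL p) ∈ Hc :=
    Subgroup.subset_closure (Set.mem_insert_of_mem _ rfl)
  -- transfer of order facts
  have hsub_pow : ∀ (g : PSL p) (hg : g ∈ Hc) (k : ℕ), ((⟨g, hg⟩ : Hc)^k = 1 ↔ g^k = 1) := by
    intro g hg k
    constructor
    · intro h
      have := congrArg (Subtype.val) h
      simpa using this
    · intro h
      exact Subtype.ext (by simpa using h)
  have all34 : ∀ h : Hc, h^3 = 1 ∨ h^4 = 1 := by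
    intro h
    rcases s4_34 (e h) with h' | h'
    · left; apply e.injective; rw [map_pow, h', map_one]
    · right; apply e.injective; rw [map_pow, h', map_one]
  have all34' : ∀ (g : PSL p), g ∈ Hc → (g^3 = 1 ∨ g^4 = 1) := by
    intro g hg
    rcases all34 ⟨g, hg⟩ with h' | h'
    · exact Or.inl ((hsub_pow g hg 3).1 h')
    · exact Or.inr ((hsub_pow g hg 4).1 h')
  -- sign homomorphism
  set φ : Hc →* ℤˣ := Equiv.Perm.sign.comp (e : Hc →* Equiv.Perm (Fin 4)) with hφ
  have φ3 : ∀ (g : PSL p) (hg : g ∈ Hc), g^3 = 1 → φ ⟨g, hg⟩ = 1 := by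
    intro g hg h
    refine s4_sign3 (e ⟨g, hg⟩) ?_
    rw [← map_pow]
    rw [(hsub_pow g hg 3).2 h, map_one]
  have φ4 : ∀ (g : PSL p) (hg : g ∈ Hc), g^4 = 1 → g^2 ≠ 1 → φ ⟨g, hg⟩ = -1 := by
    intro g hg h4 h2'
    refine s4_sign4 (e ⟨g, hg⟩) ?_ ?_
    · rw [← map_pow, (hsub_pow g hg 4).2 h4, map_one]
    · intro hh
      apply h2'
      apply (hsub_pow g hg 2).1
      apply e.injective
      rw [map_pow, hh, map_one]
  -- noncommutativity: A̅ and B̅ are not both powers of one element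
  have Zlem : ∀ g : PSL p, (QuotientGroup.mk A : PSL p) ∈ Subgroup.zpowers g →
      (QuotientGroup.mk B : PSL p) ∈ Subgroup.zpowers g → False := by
    intro g hA' hB'
    have hle : Hc ≤ Subgroup.zpowers g := by
      rw [hHc, Subgroup.closure_le]
      rintro x (rfl | rfl)
      · exact hA'
      · exact hB'
    set u' := e.symm (Equiv.swap (0:Fin 4) 1) with hu'
    set v' := e.symm (Equiv.swap (1:Fin 4) 2) with hv'
    obtain ⟨i, hi⟩ := Subgroup.mem_zpowers_iff.1 (hle u'.2)
    obtain ⟨j, hj⟩ := Subgroup.mem_zpowers_iff.1 (hle v'.2)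
    have hcomm : u' * v' = v' * u' := by
      apply Subtype.ext
      show (u' : PSL p) * (v' : PSL p) = (v' : PSL p) * (u' : PSL p)
      rw [← hi, ← hj, ← zpow_add, ← zpow_add, add_comm]
    apply s4_noncomm
    have h5 := congrArg e hcomm
    rw [map_mul, map_mul, hu', hv', MulEquiv.apply_symm_apply, MulEquiv.apply_symm_apply] at h5
    exact h5
  -- cardinality
  have hcard : Nat.card Hc = 24 := by
    rw [Nat.card_congr e.toEquiv]
    simp [Nat.card_eq_fintype_card, Fintype.card_perm]
    rfl
  -- dihedral exclusion
  have dih : ∀ u v : PSL p, u ∈ Hc → v ∈ Hc → u^2 = 1 → v^2 = 1 →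
      Subgroup.closure {u, v} = Hc → False := by
    intro u v hu hv h2u h2v hcl
    rcases all34' (u*v) (mul_mem hu hv) with h' | h'
    · have := dihedral_card_le u v h2u h2v 3 (by norm_num) h'
      rw [hcl, hcard] at this
      omega
    · have := dihedral_card_le u v h2u h2v 4 (by norm_num) h'
      rw [hcl, hcard] at this
      omega
  -- signs of generators are not both +1
  have hsur : ¬(φ ⟨QuotientGroup.mk A, amem⟩ = 1 ∧ φ ⟨QuotientGroup.mk B, bmem⟩ = 1) := by
    rintro ⟨hA', hB'⟩
    have hpre : ({⟨QuotientGroup.mk A, amem⟩, ⟨QuotientGroup.mk B, bmem⟩} : Set Hc)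
        = ((↑) : Hc → PSL p) ⁻¹' {(QuotientGroup.mk A : PSL p), QuotientGroup.mk B} := by
      ext ⟨g, hg⟩
      simp [Subtype.ext_iff]
    have htop : Subgroup.closure ({⟨QuotientGroup.mk A, amem⟩, ⟨QuotientGroup.mk B, bmem⟩} : Set Hc) = ⊤ := by
      rw [hpre, hHc]
      exact Subgroup.closure_closure_coe_preimage
    have hker : Subgroup.closure ({⟨QuotientGroup.mk A, amem⟩, ⟨QuotientGroup.mk B, bmem⟩} : Set Hc) ≤ φ.ker := by
      rw [Subgroup.closure_le]
      rintro x (rfl | rfl)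
      · exact hA'
      · exact hB'
    rw [htop] at hker
    have hval : φ (e.symm (Equiv.swap (0:Fin 4) 1)) = 1 := hker (Subgroup.mem_top _)
    rw [hφ] at hval
    simp only [MonoidHom.comp_apply] at hval
    rw [show ((e : Hc →* Equiv.Perm (Fin 4)) (e.symm (Equiv.swap (0:Fin 4) 1)))
        = Equiv.swap (0:Fin 4) 1 from e.apply_symm_apply _] at hval
    rw [s4_swap_sign] at hval
    exact absurd hval (by decide)
  -- classification of elements
  have classify : ∀ (g : SL2 p) (hg : (QuotientGroup.mk g : PSL p) ∈ Hc),
      (QuotientGroup.mk g : PSL p) ≠ 1 →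
      (((QuotientGroup.mk g : PSL p))^2 = 1
          ∧ Matrix.trace (g : Matrix (Fin 2) (Fin 2) (ZMod p)) = 0) ∨
      (((QuotientGroup.mk g : PSL p))^2 ≠ 1 ∧ φ ⟨QuotientGroup.mk g, hg⟩ = 1
          ∧ (Matrix.trace (g : Matrix (Fin 2) (Fin 2) (ZMod p)))^2 = 1) ∨
      (((QuotientGroup.mk g : PSL p))^2 ≠ 1 ∧ φ ⟨QuotientGroup.mk g, hg⟩ = -1
          ∧ (Matrix.trace (g : Matrix (Fin 2) (Fin 2) (ZMod p)))^2 = 2) := by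
    intro g hg hne
    have hM12 : (g : Matrix (Fin 2) (Fin 2) (ZMod p)) ≠ 1
        ∧ (g : Matrix (Fin 2) (Fin 2) (ZMod p)) ≠ -1 := by
      exact ⟨fun hh => hne ((hmk1 g).2 (Or.inl hh)), fun hh => hne ((hmk1 g).2 (Or.inr hh))⟩
    rcases all34' _ hg with hk | hk
    · have h2' : ((QuotientGroup.mk g : PSL p))^2 ≠ 1 := by
        intro h2''
        apply hne
        have : (QuotientGroup.mk g : PSL p) = (QuotientGroup.mk g : PSL p)^3
            * (((QuotientGroup.mk g : PSL p))^2)⁻¹ := by group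
        rw [hk, h2''] at this
        simpa using this
      exact Or.inr (Or.inl ⟨h2', φ3 _ hg hk,
        t_sq_one _ g.2 ((hpow g 3).1 hk) hM12.1 hM12.2⟩)
    · by_cases h2' : ((QuotientGroup.mk g : PSL p))^2 = 1
      · exact Or.inl ⟨h2', t_one _ g.2 ((hpow g 2).1 h2') hM12.1 hM12.2⟩
      · have hmm : (g : Matrix (Fin 2) (Fin 2) (ZMod p))^2 ≠ 1
            ∧ (g : Matrix (Fin 2) (Fin 2) (ZMod p))^2 ≠ -1 := by
          exact ⟨fun hh => h2' ((hpow g 2).2 (Or.inl hh)), fun hh => h2' ((hpow g 2).2 (Or.inr hh))⟩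
        exact Or.inr (Or.inr ⟨h2', φ4 _ hg hk h2',
          t_sq_two _ g.2 ((hpow g 4).1 hk) hmm.1 hmm.2⟩)
  -- nontriviality of the relevant elements
  have hAne : (QuotientGroup.mk A : PSL p) ≠ 1 := by
    intro h
    exact Zlem (QuotientGroup.mk B) (by rw [h]; exact one_mem _) (Subgroup.mem_zpowers _)
  have hBne : (QuotientGroup.mk B : PSL p) ≠ 1 := by
    intro h
    exact Zlem (QuotientGroup.mk A) (Subgroup.mem_zpowers _) (by rw [h]; exact one_mem _)
  have habmem : (QuotientGroup.mk (A*B) : PSL p) ∈ Hc := mul_mem amem bmem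
  have hABne : (QuotientGroup.mk (A*B) : PSL p) ≠ 1 := by
    intro h
    have heq : (QuotientGroup.mk A : PSL p) = (QuotientGroup.mk B : PSL p)⁻¹ :=
      eq_inv_of_mul_eq_one_left
        (show (QuotientGroup.mk A : PSL p) * QuotientGroup.mk B = 1 from h)
    refine Zlem (QuotientGroup.mk B) ?_ (Subgroup.mem_zpowers _)
    rw [heq]
    exact inv_mem (Subgroup.mem_zpowers _)
  have h4mem : (QuotientGroup.mk (A*B⁻¹) : PSL p) ∈ Hc := mul_mem amem (inv_mem bmem)
  have h5mem : (QuotientGroup.mk (A*B*B) : PSL p) ∈ Hc := mul_mem (mul_mem amem bmem) bmem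
  have h6mem : (QuotientGroup.mk (A*(A*B)) : PSL p) ∈ Hc := mul_mem amem (mul_mem amem bmem)
  -- classification of the six elements
  have cA := classify A amem hAne
  have cB := classify B bmem hBne
  have cAB := classify (A*B) habmem hABne
  have c4 : (QuotientGroup.mk (A*B⁻¹) : PSL p) = 1 ∨
      ((((QuotientGroup.mk (A*B⁻¹) : PSL p))^2 = 1
          ∧ Matrix.trace ((A*B⁻¹ : SL2 p) : Matrix (Fin 2) (Fin 2) (ZMod p)) = 0) ∨
      ((((QuotientGroup.mk (A*B⁻¹) : PSL p)))^2 ≠ 1 ∧ φ ⟨QuotientGroup.mk (A*B⁻¹), h4mem⟩ = 1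
          ∧ (Matrix.trace ((A*B⁻¹ : SL2 p) : Matrix (Fin 2) (Fin 2) (ZMod p)))^2 = 1) ∨
      ((((QuotientGroup.mk (A*B⁻¹) : PSL p)))^2 ≠ 1 ∧ φ ⟨QuotientGroup.mk (A*B⁻¹), h4mem⟩ = -1
          ∧ (Matrix.trace ((A*B⁻¹ : SL2 p) : Matrix (Fin 2) (Fin 2) (ZMod p)))^2 = 2)) := by
    by_cases h : (QuotientGroup.mk (A*B⁻¹) : PSL p) = 1
    · exact Or.inl h
    · exact Or.inr (classify (A*B⁻¹) h4mem h)
  have c5 : (QuotientGroup.mk (A*B*B) : PSL p) = 1 ∨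
      ((((QuotientGroup.mk (A*B*B) : PSL p))^2 = 1
          ∧ Matrix.trace ((A*B*B : SL2 p) : Matrix (Fin 2) (Fin 2) (ZMod p)) = 0) ∨
      ((((QuotientGroup.mk (A*B*B) : PSL p)))^2 ≠ 1 ∧ φ ⟨QuotientGroup.mk (A*B*B), h5mem⟩ = 1
          ∧ (Matrix.trace ((A*B*B : SL2 p) : Matrix (Fin 2) (Fin 2) (ZMod p)))^2 = 1) ∨
      ((((QuotientGroup.mk (A*B*B) : PSL p)))^2 ≠ 1 ∧ φ ⟨QuotientGroup.mk (A*B*B), h5mem⟩ = -1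
          ∧ (Matrix.trace ((A*B*B : SL2 p) : Matrix (Fin 2) (Fin 2) (ZMod p)))^2 = 2)) := by
    by_cases h : (QuotientGroup.mk (A*B*B) : PSL p) = 1
    · exact Or.inl h
    · exact Or.inr (classify (A*B*B) h5mem h)
  have c6 : (QuotientGroup.mk (A*(A*B)) : PSL p) = 1 ∨
      ((((QuotientGroup.mk (A*(A*B)) : PSL p))^2 = 1
          ∧ Matrix.trace ((A*(A*B) : SL2 p) : Matrix (Fin 2) (Fin 2) (ZMod p)) = 0) ∨
      ((((QuotientGroup.mk (A*(A*B)) : PSL p)))^2 ≠ 1 ∧ φ ⟨QuotientGroup.mk (A*(A*B)), h6mem⟩ = 1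
          ∧ (Matrix.trace ((A*(A*B) : SL2 p) : Matrix (Fin 2) (Fin 2) (ZMod p)))^2 = 1) ∨
      ((((QuotientGroup.mk (A*(A*B)) : PSL p)))^2 ≠ 1 ∧ φ ⟨QuotientGroup.mk (A*(A*B)), h6mem⟩ = -1
          ∧ (Matrix.trace ((A*(A*B) : SL2 p) : Matrix (Fin 2) (Fin 2) (ZMod p)))^2 = 2)) := by
    by_cases h : (QuotientGroup.mk (A*(A*B)) : PSL p) = 1
    · exact Or.inl h
    · exact Or.inr (classify (A*(A*B)) h6mem h)
  -- sign multiplicativity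
  have hφab : φ ⟨QuotientGroup.mk (A*B), habmem⟩
      = φ ⟨QuotientGroup.mk A, amem⟩ * φ ⟨QuotientGroup.mk B, bmem⟩ := by
    rw [show (⟨QuotientGroup.mk (A*B), habmem⟩ : Hc)
        = ⟨QuotientGroup.mk A, amem⟩ * ⟨QuotientGroup.mk B, bmem⟩ from rfl, map_mul]
  have hφ4 : φ ⟨QuotientGroup.mk (A*B⁻¹), h4mem⟩
      = φ ⟨QuotientGroup.mk A, amem⟩ * (φ ⟨QuotientGroup.mk B, bmem⟩)⁻¹ := by
    rw [show (⟨QuotientGroup.mk (A*B⁻¹), h4mem⟩ : Hc)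
        = ⟨QuotientGroup.mk A, amem⟩ * (⟨QuotientGroup.mk B, bmem⟩)⁻¹ from rfl, map_mul, map_inv]
  -- trace identities
  have hwid : Matrix.trace ((A*B : SL2 p) : Matrix (Fin 2) (Fin 2) (ZMod p))
      + Matrix.trace ((A*B⁻¹ : SL2 p) : Matrix (Fin 2) (Fin 2) (ZMod p))
      = Matrix.trace (A : Matrix (Fin 2) (Fin 2) (ZMod p))
        * Matrix.trace (B : Matrix (Fin 2) (Fin 2) (ZMod p)) := by
    have h0 := trace_adj_id (A : Matrix (Fin 2) (Fin 2) (ZMod p))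
      (B : Matrix (Fin 2) (Fin 2) (ZMod p))
    simp only [← Matrix.SpecialLinearGroup.coe_inv, ← Matrix.SpecialLinearGroup.coe_mul] at h0
    exact h0
  have h5id : Matrix.trace ((A*B*B : SL2 p) : Matrix (Fin 2) (Fin 2) (ZMod p))
      + Matrix.trace (A : Matrix (Fin 2) (Fin 2) (ZMod p))
      = Matrix.trace ((A*B : SL2 p) : Matrix (Fin 2) (Fin 2) (ZMod p))
        * Matrix.trace (B : Matrix (Fin 2) (Fin 2) (ZMod p)) := by
    have h0 := trace_adj_id (((A*B : SL2 p)) : Matrix (Fin 2) (Fin 2) (ZMod p))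
      (B : Matrix (Fin 2) (Fin 2) (ZMod p))
    simp only [← Matrix.SpecialLinearGroup.coe_inv, ← Matrix.SpecialLinearGroup.coe_mul] at h0
    rw [show ((A*B)*B⁻¹ : SL2 p) = A by group] at h0
    exact h0
  have h6id : Matrix.trace ((A*(A*B) : SL2 p) : Matrix (Fin 2) (Fin 2) (ZMod p))
      + Matrix.trace (B : Matrix (Fin 2) (Fin 2) (ZMod p))
      = Matrix.trace (A : Matrix (Fin 2) (Fin 2) (ZMod p))
        * Matrix.trace ((A*B : SL2 p) : Matrix (Fin 2) (Fin 2) (ZMod p)) := by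
    have h0 := trace_adj_id (A : Matrix (Fin 2) (Fin 2) (ZMod p))
      (((A*B : SL2 p)) : Matrix (Fin 2) (Fin 2) (ZMod p))
    simp only [← Matrix.SpecialLinearGroup.coe_inv, ← Matrix.SpecialLinearGroup.coe_mul] at h0
    rw [show (A*(A*B)⁻¹ : SL2 p) = A*B⁻¹*A⁻¹ by group] at h0
    have hconj : Matrix.trace ((A*B⁻¹*A⁻¹ : SL2 p) : Matrix (Fin 2) (Fin 2) (ZMod p))
        = Matrix.trace (B : Matrix (Fin 2) (Fin 2) (ZMod p)) := by
      rw [Matrix.SpecialLinearGroup.coe_mul, Matrix.SpecialLinearGroup.coe_mul,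
        Matrix.trace_mul_cycle, ← Matrix.SpecialLinearGroup.coe_mul,
        ← Matrix.SpecialLinearGroup.coe_mul, show (A⁻¹*A*B⁻¹ : SL2 p) = B⁻¹ by group,
        Matrix.SpecialLinearGroup.coe_inv, trace_adj]
    rw [hconj] at h0
    exact h0
  have hfr : Matrix.trace ((A*B*A⁻¹*B⁻¹ : SL2 p) : Matrix (Fin 2) (Fin 2) (ZMod p))
      = (Matrix.trace (A : Matrix (Fin 2) (Fin 2) (ZMod p)))^2
        + (Matrix.trace (B : Matrix (Fin 2) (Fin 2) (ZMod p)))^2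
        + (Matrix.trace ((A*B : SL2 p) : Matrix (Fin 2) (Fin 2) (ZMod p)))^2
        - Matrix.trace (A : Matrix (Fin 2) (Fin 2) (ZMod p))
          * Matrix.trace (B : Matrix (Fin 2) (Fin 2) (ZMod p))
          * Matrix.trace ((A*B : SL2 p) : Matrix (Fin 2) (Fin 2) (ZMod p)) - 2 := by
    have h0 := fricke_id (A : Matrix (Fin 2) (Fin 2) (ZMod p))
      (B : Matrix (Fin 2) (Fin 2) (ZMod p)) A.2 B.2
    simp only [← Matrix.SpecialLinearGroup.coe_inv, ← Matrix.SpecialLinearGroup.coe_mul] at h0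
    exact h0
  -- closure identities for the dihedral argument
  have hE1 : Subgroup.closure {(QuotientGroup.mk A : PSL p),
      QuotientGroup.mk A * QuotientGroup.mk B} = Hc := by
    rw [hHc]
    apply le_antisymm
    · rw [Subgroup.closure_le]
      rintro g (rfl | rfl)
      · exact Subgroup.subset_closure (Set.mem_insert _ _)
      · exact mul_mem (Subgroup.subset_closure (Set.mem_insert _ _))
          (Subgroup.subset_closure (Set.mem_insert_of_mem _ rfl))
    · rw [Subgroup.closure_le]
      rintro g (rfl | rfl)
      · exact Subgroup.subset_closure (Set.mem_insert _ _)
      · have hm : (QuotientGroup.mk A : PSL p)⁻¹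
            * ((QuotientGroup.mk A : PSL p) * QuotientGroup.mk B)
            ∈ Subgroup.closure {(QuotientGroup.mk A : PSL p),
                QuotientGroup.mk A * QuotientGroup.mk B} :=
          mul_mem (inv_mem (Subgroup.subset_closure (Set.mem_insert _ _)))
            (Subgroup.subset_closure (Set.mem_insert_of_mem _ rfl))
        simpa using hm
  have hE2 : Subgroup.closure {(QuotientGroup.mk A : PSL p) * QuotientGroup.mk B,
      QuotientGroup.mk B} = Hc := by
    rw [hHc]
    apply le_antisymm
    · rw [Subgroup.closure_le]
      rintro g (rfl | rfl)
      · exact mul_mem (Subgroup.subset_closure (Set.mem_insert _ _))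
          (Subgroup.subset_closure (Set.mem_insert_of_mem _ rfl))
      · exact Subgroup.subset_closure (Set.mem_insert_of_mem _ rfl)
    · rw [Subgroup.closure_le]
      rintro g (rfl | rfl)
      · have hm : ((QuotientGroup.mk A : PSL p) * QuotientGroup.mk B)
            * (QuotientGroup.mk B : PSL p)⁻¹
            ∈ Subgroup.closure {(QuotientGroup.mk A : PSL p) * QuotientGroup.mk B,
                QuotientGroup.mk B} :=
          mul_mem (Subgroup.subset_closure (Set.mem_insert _ _))
            (inv_mem (Subgroup.subset_closure (Set.mem_insert_of_mem _ rfl)))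
        simpa using hm
      · exact Subgroup.subset_closure (Set.mem_insert_of_mem _ rfl)
  -- abbreviate the traces
  set x := Matrix.trace (A : Matrix (Fin 2) (Fin 2) (ZMod p)) with hx0
  set y := Matrix.trace (B : Matrix (Fin 2) (Fin 2) (ZMod p)) with hy0
  set z := Matrix.trace ((A*B : SL2 p) : Matrix (Fin 2) (Fin 2) (ZMod p)) with hz0
  set w := Matrix.trace ((A*B⁻¹ : SL2 p) : Matrix (Fin 2) (Fin 2) (ZMod p)) with hw0
  set t5 := Matrix.trace ((A*B*B : SL2 p) : Matrix (Fin 2) (Fin 2) (ZMod p)) with ht50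
  set t6 := Matrix.trace ((A*(A*B) : SL2 p) : Matrix (Fin 2) (Fin 2) (ZMod p)) with ht60
  suffices hkey : x^2 + y^2 + z^2 - x*y*z = 3 by
    constructor
    · rw [hfr]
      linear_combination hkey
    · rintro t (rfl | rfl | rfl)
      · rcases cA with ⟨_, h⟩ | ⟨_, _, h⟩ | ⟨_, _, h⟩
        · exact Or.inl h
        · exact Or.inr (Or.inl h)
        · exact Or.inr (Or.inr h)
      · rcases cB with ⟨_, h⟩ | ⟨_, _, h⟩ | ⟨_, _, h⟩
        · exact Or.inl h
        · exact Or.inr (Or.inl h)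
        · exact Or.inr (Or.inr h)
      · rcases cAB with ⟨_, h⟩ | ⟨_, _, h⟩ | ⟨_, _, h⟩
        · exact Or.inl h
        · exact Or.inr (Or.inl h)
        · exact Or.inr (Or.inr h)
  -- helper facts for the case analysis
  have hZ4 : (QuotientGroup.mk (A*B⁻¹) : PSL p) = 1 → False := by
    intro h4e
    have heq : (QuotientGroup.mk A : PSL p) = QuotientGroup.mk B :=
      mul_inv_eq_one.mp (show (QuotientGroup.mk A : PSL p) * (QuotientGroup.mk B)⁻¹ = 1 from h4e)
    refine Zlem (QuotientGroup.mk B) ?_ (Subgroup.mem_zpowers _)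
    rw [heq]
    exact Subgroup.mem_zpowers _
  have hZ5 : (QuotientGroup.mk (A*B*B) : PSL p) = 1 → False := by
    intro h5e
    have heq : (QuotientGroup.mk A : PSL p)
        = ((QuotientGroup.mk B : PSL p) * QuotientGroup.mk B)⁻¹ :=
      eq_inv_of_mul_eq_one_left (show (QuotientGroup.mk A : PSL p)
        * ((QuotientGroup.mk B : PSL p) * QuotientGroup.mk B) = 1 by rw [← mul_assoc]; exact h5e)
    refine Zlem (QuotientGroup.mk B) ?_ (Subgroup.mem_zpowers _)
    rw [heq]
    exact inv_mem (mul_mem (Subgroup.mem_zpowers _) (Subgroup.mem_zpowers _))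
  have hZ6 : (QuotientGroup.mk (A*(A*B)) : PSL p) = 1 → False := by
    intro h6e
    have heq : (QuotientGroup.mk B : PSL p)
        = ((QuotientGroup.mk A : PSL p) * QuotientGroup.mk A)⁻¹ :=
      eq_inv_of_mul_eq_one_right (show ((QuotientGroup.mk A : PSL p)
        * QuotientGroup.mk A) * QuotientGroup.mk B = 1 by rw [mul_assoc]; exact h6e)
    refine Zlem (QuotientGroup.mk A) (Subgroup.mem_zpowers _) ?_
    rw [heq]
    exact inv_mem (mul_mem (Subgroup.mem_zpowers _) (Subgroup.mem_zpowers _))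
  have hw' : w = x*y - z := by linear_combination hwid
  have ht5' : t5 = z*y - x := by linear_combination h5id
  have ht6' : t6 = x*z - y := by linear_combination h6id
  clear hwid h5id h6id hfr
  -- the case analysis
  rcases cA with ⟨hA2, hx⟩ | ⟨hA2, hsA, hx⟩ | ⟨hA2, hsA, hx⟩
  · -- A has order 2 : x = 0
    rcases cB with ⟨hB2, hy⟩ | ⟨hB2, hsB, hy⟩ | ⟨hB2, hsB, hy⟩
    · -- (2,2,*)
      exact absurd hHc.symm (fun hcl =>
        dih _ _ amem bmem hA2 hB2 hcl)
    · -- (2,3,?)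
      rcases cAB with ⟨hAB2, hz⟩ | ⟨hAB2, hsAB, hz⟩ | ⟨hAB2, hsAB, hz⟩
      · -- (2,3,2) : dihedral on (A, AB)
        exact absurd hE1 (fun hcl => dih _ _ amem (mul_mem amem bmem) hA2 hAB2 hcl)
      · -- (2,3,3) : parity
        rw [hφab, hsB, mul_one] at hsAB
        exact absurd ⟨hsAB, hsB⟩ hsur
      · -- (2,3,4) : good
        linear_combination hy + hz + (x - y*z) * hx
    · -- (2,4,?)
      rcases cAB with ⟨hAB2, hz⟩ | ⟨hAB2, hsAB, hz⟩ | ⟨hAB2, hsAB, hz⟩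
      · -- (2,4,2) : dihedral on (A, AB)
        exact absurd hE1 (fun hcl => dih _ _ amem (mul_mem amem bmem) hA2 hAB2 hcl)
      · -- (2,4,3) : good
        linear_combination hy + hz + (x - y*z) * hx
      · -- (2,4,4) : use A*B*B
        have ht5'' : t5 = z*y := by rw [ht5', hx, sub_zero]
        rcases c5 with h5e | ⟨_, h5t⟩ | ⟨_, _, h5t⟩ | ⟨_, _, h5t⟩
        · exact (hZ5 h5e).elim
        · rw [ht5''] at h5t
          exact absurd (show (2:ZMod p)*2 = 0 by
            linear_combination -(y^2)*hz - 2*hy + (z*y)*h5t) (mul_ne_zero h2 h2)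
        · rw [ht5''] at h5t
          exact absurd (show (3:ZMod p) = 0 by
            linear_combination -(y^2)*hz - 2*hy + h5t) h3
        · rw [ht5''] at h5t
          exact absurd (show (2:ZMod p) = 0 by
            linear_combination -(y^2)*hz - 2*hy + h5t) h2
  · -- A has order 3 : x² = 1, sign +1
    rcases cB with ⟨hB2, hy⟩ | ⟨hB2, hsB, hy⟩ | ⟨hB2, hsB, hy⟩
    · -- (3,2,?)
      rcases cAB with ⟨hAB2, hz⟩ | ⟨hAB2, hsAB, hz⟩ | ⟨hAB2, hsAB, hz⟩
      · -- (3,2,2) : dihedral on (AB, B)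
        exact absurd hE2 (fun hcl => dih _ _ (mul_mem amem bmem) bmem hAB2 hB2 hcl)
      · -- (3,2,3) : parity
        rw [hφab, hsA, one_mul] at hsAB
        exact absurd ⟨hsA, hsAB⟩ hsur
      · -- (3,2,4) : good
        linear_combination hx + hz + (y - x*z) * hy
    · -- (3,3,*) : parity
      exact absurd ⟨hsA, hsB⟩ hsur
    · -- (3,4,?)
      rcases cAB with ⟨hAB2, hz⟩ | ⟨hAB2, hsAB, hz⟩ | ⟨hAB2, hsAB, hz⟩
      · -- (3,4,2) : good
        linear_combination hx + hy + (z - x*y) * hz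
      · -- (3,4,3) : parity
        rw [hφab, hsA, hsB, one_mul] at hsAB
        exact absurd hsAB (by decide)
      · -- (3,4,4) : use A*B⁻¹
        rcases c4 with h4e | ⟨_, hwv⟩ | ⟨_, hs4, hwv⟩ | ⟨_, hs4, hwv⟩
        · exact (hZ4 h4e).elim
        · -- w = 0 : z = x*y
          have hzeq : z = x*y := by linear_combination hw' - hwv
          linear_combination hx + hy + z*hzeq
        · -- order 3 : parity contradiction
          rw [hφ4, hsA, hsB, one_mul] at hs4
          exact absurd hs4 (by decide)
        · -- w² = 2 : arithmetic contradiction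
          rw [hw'] at hwv
          have hxyz : x*y*z = 1 := by
            apply mul_left_cancel₀ h2
            linear_combination -hwv + y^2*hx + hy + hz
          exact absurd (show (3:ZMod p) = 0 by
            linear_combination -(y^2*z^2)*hx - z^2*hy - 2*hz + (x*y*z+1)*hxyz) h3
  · -- A has order 4 : x² = 2, sign -1
    rcases cB with ⟨hB2, hy⟩ | ⟨hB2, hsB, hy⟩ | ⟨hB2, hsB, hy⟩
    · -- (4,2,?)
      rcases cAB with ⟨hAB2, hz⟩ | ⟨hAB2, hsAB, hz⟩ | ⟨hAB2, hsAB, hz⟩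
      · -- (4,2,2) : dihedral on (AB, B)
        exact absurd hE2 (fun hcl => dih _ _ (mul_mem amem bmem) bmem hAB2 hB2 hcl)
      · -- (4,2,3) : good
        linear_combination hx + hz + (y - x*z) * hy
      · -- (4,2,4) : use A*(A*B)
        have ht6'' : t6 = x*z := by rw [ht6', hy, sub_zero]
        rcases c6 with h6e | ⟨_, h6t⟩ | ⟨_, _, h6t⟩ | ⟨_, _, h6t⟩
        · exact (hZ6 h6e).elim
        · rw [ht6''] at h6t
          exact absurd (show (2:ZMod p)*2 = 0 by
            linear_combination -(z^2)*hx - 2*hz + (x*z)*h6t) (mul_ne_zero h2 h2)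
        · rw [ht6''] at h6t
          exact absurd (show (3:ZMod p) = 0 by
            linear_combination -(z^2)*hx - 2*hz + h6t) h3
        · rw [ht6''] at h6t
          exact absurd (show (2:ZMod p) = 0 by
            linear_combination -(z^2)*hx - 2*hz + h6t) h2
    · -- (4,3,?)
      rcases cAB with ⟨hAB2, hz⟩ | ⟨hAB2, hsAB, hz⟩ | ⟨hAB2, hsAB, hz⟩
      · -- (4,3,2) : good
        linear_combination hx + hy + (z - x*y) * hz
      · -- (4,3,3) : parity
        rw [hφab, hsA, hsB, mul_one] at hsAB
        exact absurd hsAB (by decide)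
      · -- (4,3,4) : use A*B⁻¹
        rcases c4 with h4e | ⟨_, hwv⟩ | ⟨_, hs4, hwv⟩ | ⟨_, hs4, hwv⟩
        · exact (hZ4 h4e).elim
        · have hzeq : z = x*y := by linear_combination hw' - hwv
          linear_combination hx + hy + z*hzeq
        · rw [hφ4, hsA, hsB] at hs4
          exact absurd hs4 (by decide)
        · rw [hw'] at hwv
          have hxyz : x*y*z = 1 := by
            apply mul_left_cancel₀ h2
            linear_combination -hwv + x^2*hy + hx + hz
          exact absurd (show (3:ZMod p) = 0 by
            linear_combination -(y^2*z^2)*hx - 2*(z^2)*hy - 2*hz + (x*y*z+1)*hxyz) h3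
    · -- (4,4,?)
      rcases cAB with ⟨hAB2, hz⟩ | ⟨hAB2, hsAB, hz⟩ | ⟨hAB2, hsAB, hz⟩
      · -- (4,4,2) : use A*B⁻¹, contradiction
        rcases c4 with h4e | ⟨_, hwv⟩ | ⟨_, hs4, hwv⟩ | ⟨_, hs4, hwv⟩
        · exact (hZ4 h4e).elim
        · have hxy0 : x*y = 0 := by linear_combination -hw' + hwv + hz
          exact absurd (show (2:ZMod p)*2 = 0 by
            linear_combination -(y^2)*hx - 2*hy + (x*y)*hxy0) (mul_ne_zero h2 h2)
        · have hwxy : w = x*y := by linear_combination hw' - hz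
          rw [hwxy] at hwv
          exact absurd (show (3:ZMod p) = 0 by
            linear_combination -(y^2)*hx - 2*hy + hwv) h3
        · have hwxy : w = x*y := by linear_combination hw' - hz
          rw [hwxy] at hwv
          exact absurd (show (2:ZMod p) = 0 by
            linear_combination -(y^2)*hx - 2*hy + hwv) h2
      · -- (4,4,3) : use A*B⁻¹
        rcases c4 with h4e | ⟨_, hwv⟩ | ⟨_, hs4, hwv⟩ | ⟨_, hs4, hwv⟩
        · exact (hZ4 h4e).elim
        · have hzeq : z = x*y := by linear_combination hw' - hwv
          exact absurd (show (3:ZMod p) = 0 by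
            linear_combination -(y^2)*hx - 2*hy + hz - (z+x*y)*hzeq) h3
        · -- order 3 : success
          rw [hw'] at hwv
          have hxyz : x*y*z = 2 := by
            apply mul_left_cancel₀ h2
            linear_combination -hwv + y^2*hx + 2*hy + hz
          linear_combination hx + hy + hz - hxyz
        · -- order 4 : parity contradiction
          rw [hφ4, hsA, hsB] at hs4
          exact absurd hs4 (by decide)
      · -- (4,4,4) : parity
        rw [hφab, hsA, hsB] at hsAB
        exact absurd hsAB (by decide)

end OctahedralAux

theorem octahedral_pair_traces (p : ℕ) (hp : p.Prime) (hp5 : 5 < p)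
    (A B : Matrix.SpecialLinearGroup (Fin 2) (ZMod p))
    (hiso : Nonempty
      ((Subgroup.closure {(QuotientGroup.mk A :
          Matrix.SpecialLinearGroup (Fin 2) (ZMod p) ⧸
            Subgroup.center (Matrix.SpecialLinearGroup (Fin 2) (ZMod p))),
        QuotientGroup.mk B}) ≃* Equiv.Perm (Fin 4))) :
    Matrix.trace ((A * B * A⁻¹ * B⁻¹ : Matrix.SpecialLinearGroup (Fin 2) (ZMod p)) :
      Matrix (Fin 2) (Fin 2) (ZMod p)) = 1 ∧
    (∀ t : ZMod p,
      (t = Matrix.trace (A : Matrix (Fin 2) (Fin 2) (ZMod p)) ∨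
        t = Matrix.trace (B : Matrix (Fin 2) (Fin 2) (ZMod p)) ∨
        t = Matrix.trace ((A * B : Matrix.SpecialLinearGroup (Fin 2) (ZMod p)) :
          Matrix (Fin 2) (Fin 2) (ZMod p))) →
      t = 0 ∨ t ^ 2 = 1 ∨ t ^ 2 = 2) := by
  obtain ⟨e⟩ := hiso
  exact OctahedralAux.core p hp hp5 A B e
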